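/- Root location for the characteristic polynomial of the one-step-gradient Uzawa iteration. Let 0 < α < 1, let 0 < m ≤ M, let μ ∈ [m², M²], and let τ̃ satisfy 0 < τ̃ < 2/M². Then both complex roots of the quadratic p(λ) = λ² − (2 − α − τ̃αμ)λ + (1 − α) have modulus strictly less than 1. -/

import Mathlib

set_option maxHeartbeats 1000000 in
/-- Root location for the characteristic polynomial of the
one-step-gradient Uzawa iteration. -/
theorem characteristic_roots_in_unit_disc
    (α m M μ τt : ℝ)
    (hα0 : 0 < α) (hα1 : α < 1)
    (hm : 0 < m) (hmM : m ≤ M)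
    (hμ : μ ∈ Set.Icc (m ^ 2) (M ^ 2))
    (hτt0 : 0 < τt) (hτt2 : τt < 2 / M ^ 2) :
    ∀ z : ℂ, z ^ 2 - ((2 - α - τt * α * μ : ℝ) : ℂ) * z + ((1 - α : ℝ) : ℂ) = 0 →
      ‖z‖ < 1 := by
  intro z hz
  set b : ℝ := 2 - α - τt * α * μ with hbdef
  set c : ℝ := 1 - α with hcdef
  obtain ⟨hμ1, hμ2⟩ := hμ
  have hM0 : (0:ℝ) < M ^ 2 := by nlinarith
  have hτM : τt * M ^ 2 < 2 := by
    have h := (lt_div_iff₀ hM0).mp hτt2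
    linarith
  have hμ0 : 0 < μ := lt_of_lt_of_le (by positivity) hμ1
  have hτμ : τt * μ < 2 := lt_of_le_of_lt (by nlinarith) hτM
  have hταμ0 : 0 < τt * α * μ := by positivity
  have hc0 : 0 < c := by simp [hcdef]; linarith
  have hc1 : c < 1 := by simp [hcdef]; linarith
  have hb1 : b < 1 + c := by simp [hbdef, hcdef]; nlinarith
  have hb2 : -(1 + c) < b := by simp [hbdef, hcdef]; nlinarith
  set x := z.re with hx
  set y := z.im with hy
  have hre : x * x - y * y - b * x + c = 0 := by
    have := congrArg Complex.re hz
    simpa [pow_two, Complex.mul_re, Complex.sub_re, Complex.add_re] using this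
  have him : (x * y + y * x) - b * y = 0 := by
    have := congrArg Complex.im hz
    simpa [pow_two, Complex.mul_im, Complex.sub_im, Complex.add_im] using this
  have habs : ‖z‖ ^ 2 = x * x + y * y := by
    rw [Complex.sq_norm, Complex.normSq_apply]
  clear_value x y
  clear hz hx hy
  have hlt : x * x + y * y < 1 := by
    rcases eq_or_ne y 0 with hy0 | hy0
    · have hre' : x * x - b * x + c = 0 := by 
        rw [hy0] at hre; linarith [hre, mul_self_nonneg (0:ℝ)]
      rcases le_or_gt 1 x with h1 | h1
      · exfalso; nlinarith [mul_nonneg (by linarith : (0:ℝ) ≤ x - 1) (by linarith : (0:ℝ) ≤ x - c)]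
      · rcases le_or_gt x (-1) with h2 | h2
        · exfalso; nlinarith [mul_nonneg (by linarith : (0:ℝ) ≤ -1 - x) (by linarith : (0:ℝ) ≤ -c - x)]
        · nlinarith [hy0, sq_nonneg y]
    · have h2x : 2 * x = b := by
        have : y * (2 * x - b) = 0 := by linear_combination him
        rcases mul_eq_zero.mp this with h | h
        · exact absurd h hy0
        · linarith
      nlinarith
  have : ‖z‖ ^ 2 < 1 := by rw [habs]; exact hlt
  nlinarith [norm_nonneg z]
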